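/- arXiv:1812.01423 — 2 statements merged into one kernel-verified Lean document; each statement's English description precedes it below -/
import Mathlib

section
/- Every 2×2 real symplectic matrix admits an Euler decomposition: if S · Ω · Sᵀ = Ω with Ω = [[0, 1], [−1, 0]], then there exist real numbers θ, r, φ such that S = O(θ) · T(r) · O(φ), where O(·) is the rotation matrix [[cos θ, sin θ], [−sin θ, cos θ]] and T(r) = diag(e^{−r}, e^{r}). -/
open Real Matrix

/-- Rotation matrix `O(θ)`. -/
noncomputable def rotO (θ : ℝ) : Matrix (Fin 2) (Fin 2) ℝ :=
  !![Real.cos θ, Real.sin θ; -Real.sin θ, Real.cos θ]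

/-- Squeezing matrix `T(r) = diag(e^{-r}, e^{r})`. -/
noncomputable def sqT (r : ℝ) : Matrix (Fin 2) (Fin 2) ℝ :=
  !![Real.exp (-r), 0; 0, Real.exp r]

lemma exists_angle (x y : ℝ) (h : x ^ 2 + y ^ 2 = 1) :
    ∃ α : ℝ, Real.cos α = x ∧ Real.sin α = y := by
  have hx1 : -1 ≤ x := by nlinarith
  have hx2 : x ≤ 1 := by nlinarith
  rcases le_or_gt 0 y with hy | hy
  · refine ⟨Real.arccos x, Real.cos_arccos hx1 hx2, ?_⟩
    rw [Real.sin_arccos, show (1:ℝ) - x ^ 2 = y ^ 2 by linarith, Real.sqrt_sq hy]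
  · refine ⟨-Real.arccos x, by rw [Real.cos_neg]; exact Real.cos_arccos hx1 hx2, ?_⟩
    rw [Real.sin_neg, Real.sin_arccos, show (1:ℝ) - x ^ 2 = y ^ 2 by linarith,
      Real.sqrt_sq_eq_abs, abs_of_neg hy, neg_neg]

lemma scalar_decomp (a b c d : ℝ) (hdet : a * d - b * c = 1) :
    ∃ θ r φ : ℝ,
      a = Real.cos θ * Real.exp (-r) * Real.cos φ - Real.sin θ * Real.exp r * Real.sin φ ∧
      b = Real.cos θ * Real.exp (-r) * Real.sin φ + Real.sin θ * Real.exp r * Real.cos φ ∧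
      c = -(Real.sin θ * Real.exp (-r)) * Real.cos φ - Real.cos θ * Real.exp r * Real.sin φ ∧
      d = -(Real.sin θ * Real.exp (-r)) * Real.sin φ + Real.cos θ * Real.exp r * Real.cos φ := by
  obtain ⟨p, hp0⟩ : ∃ p : ℝ, p = (a + d) / 2 := ⟨_, rfl⟩
  obtain ⟨q, hq0⟩ : ∃ q : ℝ, q = (b - c) / 2 := ⟨_, rfl⟩
  obtain ⟨u, hu0⟩ : ∃ u : ℝ, u = (d - a) / 2 := ⟨_, rfl⟩
  obtain ⟨v, hv0⟩ : ∃ v : ℝ, v = (b + c) / 2 := ⟨_, rfl⟩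
  obtain ⟨m, hm0⟩ : ∃ m : ℝ, m = Real.sqrt (u ^ 2 + v ^ 2) := ⟨_, rfl⟩
  have hm : 0 ≤ m := hm0 ▸ Real.sqrt_nonneg _
  have hm2 : m ^ 2 = u ^ 2 + v ^ 2 := hm0 ▸ Real.sq_sqrt (by positivity)
  obtain ⟨r, hr0⟩ : ∃ r : ℝ, r = Real.arsinh m := ⟨_, rfl⟩
  have hsh : Real.sinh r = m := hr0 ▸ Real.sinh_arsinh m
  have hch2 : Real.cosh r ^ 2 = 1 + m ^ 2 := by rw [Real.cosh_sq']; rw [hsh]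
  have hchpos : 0 < Real.cosh r := Real.cosh_pos r
  have hpq : p ^ 2 + q ^ 2 = Real.cosh r ^ 2 := by
    rw [hch2, hm2, hp0, hq0, hu0, hv0]; nlinarith [hdet]
  obtain ⟨ψ, hψc, hψs⟩ := exists_angle (p / Real.cosh r) (q / Real.cosh r) (by
    rw [div_pow, div_pow, ← add_div, hpq, div_self (pow_ne_zero 2 hchpos.ne')])
  have hp' : Real.cosh r * Real.cos ψ = p := by
    rw [hψc, mul_comm, div_mul_cancel₀ _ hchpos.ne']
  have hq' : Real.cosh r * Real.sin ψ = q := by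
    rw [hψs, mul_comm, div_mul_cancel₀ _ hchpos.ne']
  have hδ : ∃ δ : ℝ, Real.sinh r * Real.cos δ = u ∧ Real.sinh r * Real.sin δ = v := by
    rcases eq_or_lt_of_le hm with hm0' | hmpos
    · have huv : u ^ 2 + v ^ 2 = 0 := by rw [← hm2, ← hm0']; ring
      have hu' : u = 0 := by nlinarith [sq_nonneg u, sq_nonneg v]
      have hv' : v = 0 := by nlinarith [sq_nonneg u, sq_nonneg v]
      refine ⟨0, ?_, ?_⟩
      · rw [hsh, ← hm0', hu']; ring
      · rw [hsh, ← hm0', hv']; ring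
    · obtain ⟨δ, hc1, hs1⟩ := exists_angle (u / m) (v / m) (by
        rw [div_pow, div_pow, ← add_div, ← hm2, div_self (pow_ne_zero 2 hmpos.ne')])
      refine ⟨δ, ?_, ?_⟩
      · rw [hsh, hc1, mul_comm, div_mul_cancel₀ _ hmpos.ne']
      · rw [hsh, hs1, mul_comm, div_mul_cancel₀ _ hmpos.ne']
  obtain ⟨δ, hu', hv'⟩ := hδ
  rw [show ψ = (ψ + δ) / 2 + (ψ - δ) / 2 by ring] at hp' hq'
  rw [show δ = (ψ + δ) / 2 - (ψ - δ) / 2 by ring] at hu' hv'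
  rw [Real.cos_add] at hp'
  rw [Real.sin_add] at hq'
  rw [Real.cos_sub] at hu'
  rw [Real.sin_sub] at hv'
  rw [hp0] at hp'; rw [hq0] at hq'; rw [hu0] at hu'; rw [hv0] at hv'
  refine ⟨(ψ + δ) / 2, r, (ψ - δ) / 2, ?_, ?_, ?_, ?_⟩
  · rw [← Real.cosh_sub_sinh, ← Real.cosh_add_sinh]
    linear_combination hu' - hp'
  · rw [← Real.cosh_sub_sinh, ← Real.cosh_add_sinh]
    linear_combination -hq' - hv'
  · rw [← Real.cosh_sub_sinh, ← Real.cosh_add_sinh]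
    linear_combination hq' - hv'
  · rw [← Real.cosh_sub_sinh, ← Real.cosh_add_sinh]
    linear_combination -hp' - hu'

theorem euler_decomposition (S : Matrix (Fin 2) (Fin 2) ℝ)
    (hS : S * !![0, 1; -1, 0] * Sᵀ = !![(0 : ℝ), 1; -1, 0]) :
    ∃ θ r φ : ℝ, S = rotO θ * sqT r * rotO φ := by
  have h01 := congrFun (congrFun hS 0) 1
  simp [Matrix.mul_apply, Fin.sum_univ_succ] at h01
  obtain ⟨θ, r, φ, hA, hB, hC, hD⟩ :=
    scalar_decomp (S 0 0) (S 0 1) (S 1 0) (S 1 1) (by linarith)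
  refine ⟨θ, r, φ, ?_⟩
  ext i j
  fin_cases i <;> fin_cases j <;>
    simp [rotO, sqT, Matrix.mul_apply, Fin.sum_univ_succ] <;>
    [(rw [hA]); (rw [hB]); (rw [hC]); (rw [hD])] <;> ring
end

section
/- For every λ ∈ [0, 1] and every x ≥ 0, λ·g(x) ≤ g(λ·x), where g(x) = (1+x)·log(1+x) − x·log(x) with g(0) = 0. Consequently, for all N̄, N̄_E ≥ 0 and τ ∈ [0, 1], the Holevo capacity of the thermal-noise channel is bounded by the Smith–König upper bound: g(τN̄+(1−τ)N̄_E) − g((1−τ)N̄_E) ≤ g(τN̄+(1−τ)N̄_E) − (1−τ)·g(N̄_E). -/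
open Real

/-- The entropic function `g(x) = (1+x) log(1+x) - x log x` (with `g 0 = 0`,
since `Real.log 0 = 0` in Mathlib). -/
noncomputable def gEnt (x : ℝ) : ℝ := (1 + x) * Real.log (1 + x) - x * Real.log x

lemma gEnt_superhom (lam x : ℝ) (h0 : 0 ≤ lam) (h1 : lam ≤ 1) (hx : 0 ≤ x) :
    lam * gEnt x ≤ gEnt (lam * x) := by
  rcases eq_or_lt_of_le h0 with h|hlam
  · simp [gEnt, ← h]
  rcases eq_or_lt_of_le hx with h|hxpos
  · simp [gEnt, ← h]
  have h1x : (0:ℝ) < 1 + x := by linarith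
  have h1lx : (0:ℝ) < 1 + lam * x := by nlinarith
  -- (A): lam * log(1+x) ≤ log(1+lam*x) by concavity of log
  have hA : lam * Real.log (1 + x) ≤ Real.log (1 + lam * x) := by
    have hc := (strictConcaveOn_log_Ioi.concaveOn).2
      (Set.mem_Ioi.mpr h1x) (Set.mem_Ioi.mpr (by norm_num : (0:ℝ) < 1))
      h0 (by linarith : (0:ℝ) ≤ 1 - lam) (by ring)
    simp only [smul_eq_mul, Real.log_one, mul_zero, add_zero] at hc
    have he : lam * (1 + x) + (1 - lam) * 1 = 1 + lam * x := by ring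
    rw [he] at hc
    linarith
  -- (B): log lam + log(1+x) ≤ log(1+lam*x)
  have hB : Real.log lam + Real.log (1 + x) ≤ Real.log (1 + lam * x) := by
    rw [← Real.log_mul (ne_of_gt hlam) (ne_of_gt h1x)]
    apply Real.log_le_log (by positivity)
    nlinarith
  have hB' : lam * x * (Real.log lam + Real.log (1 + x)) ≤
      lam * x * Real.log (1 + lam * x) :=
    mul_le_mul_of_nonneg_left hB (by positivity)
  unfold gEnt
  rw [Real.log_mul (ne_of_gt hlam) (ne_of_gt hxpos)]
  nlinarith [hA, hB']

theorem gEnt_superhomogeneous_and_holevo_le_smith_koenig :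
    (∀ lam x : ℝ, 0 ≤ lam → lam ≤ 1 → 0 ≤ x → lam * gEnt x ≤ gEnt (lam * x)) ∧
      (∀ Nbar NE τ : ℝ, 0 ≤ Nbar → 0 ≤ NE → 0 ≤ τ → τ ≤ 1 →
        gEnt (τ * Nbar + (1 - τ) * NE) - gEnt ((1 - τ) * NE) ≤
          gEnt (τ * Nbar + (1 - τ) * NE) - (1 - τ) * gEnt NE) := by
  refine ⟨gEnt_superhom, fun Nbar NE τ hN hNE hτ hτ1 => ?_⟩
  have := gEnt_superhom (1 - τ) NE (by linarith) (by linarith) hNE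
  linarith
end
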